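/- Under the hypotheses W H_1 + (1/C)1_C 1_C^⊤ = I_C, H_1 1_C = 0, and μ W^⊤ W = m H_1 H_1^⊤ (μ, m > 0), the normalized class-mean matrix M = H_1 (after normalization M = H_1/‖H_1‖-columnwise) satisfies M^⊤ M = (C/(C-1))(I_C - (1/C) 1_C 1_C^⊤), i.e., the class means form a simplex equiangular tight frame: all columns of H_1 have equal norm and the cosine of the angle between any two distinct columns is -1/(C-1). -/

import Mathlib

open Matrix

/-- Under the end-of-training hypotheses `W H₁ + (1/C) 1_C 1_Cᵀ = I_C`, `H₁ 1_C = 0`, and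
`μ Wᵀ W = m H₁ H₁ᵀ`, the column-normalized class-mean matrix `M` satisfies
`Mᵀ M = (C/(C-1)) (I_C - (1/C) 1_C 1_Cᵀ)`, i.e., the class means form a simplex ETF. -/
theorem stmt_15 (C n : ℕ) (hC : 2 ≤ C) (hn : C ≤ n) (μ m : ℝ) (hμ : 0 < μ) (hm : 0 < m)
    (W : Matrix (Fin C) (Fin n) ℝ) (H1 : Matrix (Fin n) (Fin C) ℝ)
    (hres : W * H1 + (C : ℝ)⁻¹ • Matrix.of (fun _ _ : Fin C => (1 : ℝ)) = 1)
    (hmean : H1.mulVec (fun _ => 1) = 0)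
    (hinv : μ • (Wᵀ * W) = m • (H1 * H1ᵀ))
    (M : Matrix (Fin n) (Fin C) ℝ)
    (hM : ∀ i c, M i c = H1 i c / Real.sqrt (∑ i', H1 i' c ^ 2)) :
    Mᵀ * M = ((C : ℝ) / ((C : ℝ) - 1)) •
      ((1 : Matrix (Fin C) (Fin C) ℝ) - (C : ℝ)⁻¹ • Matrix.of (fun _ _ : Fin C => (1 : ℝ))) := by
  have hCpos : (0 : ℝ) < (C : ℝ) := by positivity
  have hCne : (C : ℝ) ≠ 0 := ne_of_gt hCpos
  set J : Matrix (Fin C) (Fin C) ℝ := Matrix.of (fun _ _ : Fin C => (1 : ℝ)) with hJ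
  have hJJ : J * J = (C : ℝ) • J := by
    ext i j
    simp [hJ, Matrix.mul_apply, Finset.sum_const]
  have hJT : Jᵀ = J := by ext i j; simp [hJ]
  set P : Matrix (Fin C) (Fin C) ℝ := 1 - (C : ℝ)⁻¹ • J with hP
  have hWH : W * H1 = P := by
    rw [hP]; rw [← hres]; abel
  have hPT : Pᵀ = P := by
    rw [hP, Matrix.transpose_sub, Matrix.transpose_one, Matrix.transpose_smul, hJT]
  have hPP : P * P = P := by
    have h1 : ((C : ℝ)⁻¹ • J) * ((C : ℝ)⁻¹ • J) = (C : ℝ)⁻¹ • J := by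
      rw [Matrix.smul_mul, Matrix.mul_smul, hJJ, smul_smul, smul_smul]
      congr 1
      field_simp
    rw [hP, Matrix.sub_mul, Matrix.mul_sub, Matrix.mul_sub, one_mul, mul_one, h1, Matrix.one_mul]
    abel
  set G : Matrix (Fin C) (Fin C) ℝ := H1ᵀ * H1 with hG
  -- G * G = (μ/m) • P
  have key : m • (G * G) = μ • P := by
    have h1 : H1ᵀ * (μ • (Wᵀ * W)) * H1 = H1ᵀ * (m • (H1 * H1ᵀ)) * H1 := by rw [hinv]
    have hL : H1ᵀ * (μ • (Wᵀ * W)) * H1 = μ • P := by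
      rw [Matrix.mul_smul, Matrix.smul_mul]
      congr 1
      calc H1ᵀ * (Wᵀ * W) * H1 = (W * H1)ᵀ * (W * H1) := by
            rw [Matrix.transpose_mul]; simp only [Matrix.mul_assoc]
        _ = P := by rw [hWH, hPT, hPP]
    have hR : H1ᵀ * (m • (H1 * H1ᵀ)) * H1 = m • (G * G) := by
      rw [Matrix.mul_smul, Matrix.smul_mul]
      congr 1
      rw [hG]; simp only [Matrix.mul_assoc]
    rw [hL, hR] at h1
    exact h1.symm
  have hGsq : G * G = (μ / m) • P := by
    have := congrArg (fun X => m⁻¹ • X) key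
    simpa [smul_smul, inv_mul_cancel₀ (ne_of_gt hm), div_eq_inv_mul, mul_comm] using this
  set s : ℝ := Real.sqrt (μ / m) with hs
  have hspos : 0 < s := Real.sqrt_pos.mpr (div_pos hμ hm)
  have hss : s * s = μ / m := Real.mul_self_sqrt (le_of_lt (div_pos hμ hm))
  -- P is PSD since P = Pᴴ * P
  have hPpsd : (s • P).PosSemidef := by
    have h2 : (Real.sqrt s • P)ᴴ * (Real.sqrt s • P) = s • P := by
      rw [Matrix.conjTranspose_eq_transpose_of_trivial, Matrix.transpose_smul, hPT,
        Matrix.smul_mul, Matrix.mul_smul, hPP, smul_smul,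
        Real.mul_self_sqrt (le_of_lt hspos)]
    rw [← h2]
    exact Matrix.posSemidef_conjTranspose_mul_self _
  have hGpsd : G.PosSemidef := by
    have := Matrix.posSemidef_conjTranspose_mul_self H1
    rwa [Matrix.conjTranspose_eq_transpose_of_trivial] at this
  have hGeq : G = s • P := by
    open scoped MatrixOrder in
    refine (CFC.sq_eq_sq_iff G (s • P) hGpsd.nonneg hPpsd.nonneg).mp ?_
    rw [pow_two, pow_two, hGsq, Matrix.smul_mul, Matrix.mul_smul, hPP, smul_smul, hss]
  -- entrywise consequences
  have hentry : ∀ c d, (∑ i, H1 i c * H1 i d)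
      = s * ((if c = d then 1 else 0) - (C : ℝ)⁻¹) := by
    intro c d
    have := congrFun (congrFun hGeq c) d
    simpa [hG, hP, hJ, Matrix.mul_apply, Matrix.one_apply, Matrix.sub_apply,
      mul_sub] using this
  have hone : (1 : ℝ) - (C : ℝ)⁻¹ > 0 := by
    have h2 : (C : ℝ)⁻¹ < 1 := by
      rw [inv_lt_one_iff₀]
      right
      exact_mod_cast lt_of_lt_of_le one_lt_two hC
    linarith
  set a : ℝ := s * (1 - (C : ℝ)⁻¹) with ha
  have hapos : 0 < a := mul_pos hspos hone
  have hdiag : ∀ c, (∑ i, H1 i c ^ 2) = a := by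
    intro c
    have := hentry c c
    simpa [pow_two, ha] using this
  have hsqa : Real.sqrt a * Real.sqrt a = a := Real.mul_self_sqrt (le_of_lt hapos)
  -- final computation
  ext c d
  have hMM : (Mᵀ * M) c d = (∑ i, H1 i c * H1 i d) / a := by
    rw [Matrix.mul_apply]
    have : ∀ i, Mᵀ c i * M i d = (H1 i c * H1 i d) / a := by
      intro i
      rw [Matrix.transpose_apply, hM, hM, hdiag, hdiag]
      field_simp
      rw [Real.sq_sqrt hapos.le]; ring
    rw [Finset.sum_congr rfl fun i _ => this i, ← Finset.sum_div]
  rw [hMM, hentry, hP]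
  simp only [Matrix.smul_apply, Matrix.sub_apply, Matrix.one_apply, Matrix.smul_apply, hJ,
    Matrix.of_apply, smul_eq_mul]
  have hC1 : (C : ℝ) - 1 ≠ 0 := by
    have : (1:ℝ) < (C:ℝ) := by exact_mod_cast lt_of_lt_of_le one_lt_two hC
    linarith
  rw [ha]
  by_cases h : c = d <;> simp [h] <;> field_simp <;> ring
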